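/- Let k, n, m be integers with k, n, m ≥ 2 and suppose there exists a (2^k, 2^m; n, m)-de Bruijn array code of size Δ in which every column of every codeword has even weight. Then there exists a (2^k, 2^m; n + 1, m)-de Bruijn array code of size 2^m · Δ. -/

import Mathlib

open Finset

/-- Lucas for p = 2: reduction mod 2^m doesn't change choose mod 2 for small lower index. -/
lemma lucas2 : ∀ (m a i : ℕ), i < 2 ^ m → ((a % 2 ^ m).choose i : ZMod 2) = (a.choose i : ZMod 2)
  | 0, a, i, hi => by
    interval_cases i
    simp
  | (m + 1), a, i, hi => by
    have h2 : (Nat.choose a i : ZMod 2)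
        = ((a % 2).choose (i % 2) * (a / 2).choose (i / 2) : ℕ) := by
      have := @Choose.choose_modEq_choose_mod_mul_choose_div_nat a i 2 ⟨Nat.prime_two⟩
      exact_mod_cast (ZMod.natCast_eq_natCast_iff _ _ _).mpr this
    have h2' : (Nat.choose (a % 2 ^ (m + 1)) i : ZMod 2)
        = (((a % 2 ^ (m + 1)) % 2).choose (i % 2) *
            ((a % 2 ^ (m + 1)) / 2).choose (i / 2) : ℕ) := by
      have := @Choose.choose_modEq_choose_mod_mul_choose_div_nat (a % 2 ^ (m+1)) i 2
        ⟨Nat.prime_two⟩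
      exact_mod_cast (ZMod.natCast_eq_natCast_iff _ _ _).mpr this
    have hmod : a % 2 ^ (m + 1) % 2 = a % 2 := by
      rw [Nat.mod_mod_of_dvd _ ⟨2 ^ m, by ring⟩]
    have hdiv : a % 2 ^ (m + 1) / 2 = (a / 2) % 2 ^ m := by
      rw [pow_succ, mul_comm]
      exact Nat.mod_mul_right_div_self a 2 (2 ^ m)
    have hi2 : i / 2 < 2 ^ m := by
      apply Nat.div_lt_of_lt_mul
      rw [mul_comm, ← pow_succ]
      exact hi
    have IH := lucas2 m (a / 2) (i / 2) hi2
    rw [h2, h2', hmod, hdiv]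
    push_cast
    rw [IH]

lemma choose_matrix_entry (m j : ℕ) (y i : Fin m) :
    ∑ l : Fin m, (Nat.choose y.val l.val : ZMod 2) *
      (if l.val ≤ i.val then (Nat.choose j (i.val - l.val) : ZMod 2) else 0)
      = (Nat.choose (j + y.val) i.val : ZMod 2) := by
  have hvdm : Nat.choose (y.val + j) i.val
      = ∑ l ∈ range (i.val + 1), Nat.choose y.val l * Nat.choose j (i.val - l) := by
    rw [Nat.add_choose_eq]
    rw [Finset.Nat.sum_antidiagonal_eq_sum_range_succ_mk]
  rw [add_comm j y.val, hvdm]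
  push_cast
  rw [Fin.sum_univ_eq_sum_range
    (fun l => (Nat.choose y.val l : ZMod 2) *
      (if l ≤ i.val then (Nat.choose j (i.val - l) : ZMod 2) else 0)) m]
  refine ((Finset.sum_subset (Finset.range_subset_range.mpr i.2) ?_).symm).trans ?_
  · intro l _ hl
    rw [Finset.mem_range, Nat.lt_succ_iff] at hl
    rw [if_neg hl, mul_zero]
  · apply Finset.sum_congr rfl
    intro l hl
    rw [Finset.mem_range, Nat.lt_succ_iff] at hl
    rw [if_pos hl]

lemma choose_mulVec_inj (m j : ℕ) :
    Function.Injective fun (u : Fin m → ZMod 2) (y : Fin m) =>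
      ∑ i : Fin m, (Nat.choose (j + y.val) i.val : ZMod 2) * u i := by
  set W : Matrix (Fin m) (Fin m) (ZMod 2) :=
    fun y i => (Nat.choose (j + y.val) i.val : ZMod 2) with hW
  have : (fun (u : Fin m → ZMod 2) (y : Fin m) =>
      ∑ i : Fin m, (Nat.choose (j + y.val) i.val : ZMod 2) * u i) = W.mulVec := by
    funext u y
    simp [Matrix.mulVec, dotProduct, hW]
  rw [this]
  rw [Matrix.mulVec_injective_iff_isUnit]
  set B : Matrix (Fin m) (Fin m) (ZMod 2) :=
    fun y l => (Nat.choose y.val l.val : ZMod 2) with hB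
  set U : Matrix (Fin m) (Fin m) (ZMod 2) :=
    fun l i => if l.val ≤ i.val then (Nat.choose j (i.val - l.val) : ZMod 2) else 0 with hU
  have hprod : W = B * U := by
    ext y i
    rw [Matrix.mul_apply]
    exact (choose_matrix_entry m j y i).symm
  rw [Matrix.isUnit_iff_isUnit_det, hprod, Matrix.det_mul]
  have hdB : B.det = 1 := by
    rw [Matrix.det_of_lowerTriangular]
    · simp [hB]
    · intro y l h
      simp only [hB]
      rw [Nat.choose_eq_zero_of_lt (by exact h), Nat.cast_zero]
  have hdU : U.det = 1 := by
    rw [Matrix.det_of_upperTriangular]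
    · simp [hU]
    · intro l i h
      simp only [hU]
      have : (i : ℕ) < (l : ℕ) := h
      rw [if_neg (by omega)]
  rw [hdB, hdU, mul_one]
  exact isUnit_one

/-- bits of `t` as a vector over `ZMod 2`. -/
def bits (m : ℕ) (t : Fin (2 ^ m)) : Fin m → ZMod 2 :=
  fun i => if (t : ℕ).testBit i then 1 else 0

/-- the offset family: `2^m` binary sequences on `ZMod (2^m)`. -/
def gfun (m : ℕ) (t : Fin (2 ^ m)) (j : ZMod (2 ^ m)) : ZMod 2 :=
  ∑ i : Fin m, (Nat.choose (ZMod.val j) i.val : ZMod 2) * bits m t i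

lemma gfun_window (m : ℕ) (hm : 0 < m) (t : Fin (2 ^ m)) (j : ZMod (2 ^ m)) (y : Fin m) :
    gfun m t (j + (y : ℕ)) =
      ∑ i : Fin m, (Nat.choose (ZMod.val j + y.val) i.val : ZMod 2) * bits m t i := by
  unfold gfun
  apply Finset.sum_congr rfl
  intro i _
  congr 1
  have hval : (j + (y : ℕ)).val = (ZMod.val j + y.val) % 2 ^ m := by
    rw [ZMod.val_add]
    congr 1
    rw [ZMod.val_natCast_of_lt]
    exact lt_of_lt_of_le y.2 (Nat.le_of_lt (Nat.lt_two_pow_self (n := m)))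
  rw [hval]
  exact lucas2 m (ZMod.val j + y.val) i.val
    (lt_of_lt_of_le i.2 (Nat.le_of_lt (Nat.lt_two_pow_self (n := m))))

lemma gfun_existsUnique (m : ℕ) (hm : 0 < m) (j : ZMod (2 ^ m)) (v : Fin m → ZMod 2) :
    ∃! t : Fin (2 ^ m), ∀ y : Fin m, gfun m t (j + (y : ℕ)) = v y := by
  have hinj : Function.Injective
      (fun t : Fin (2 ^ m) => fun y : Fin m => gfun m t (j + (y : ℕ))) := by
    intro t t' h
    have hb : bits m t = bits m t' := by
      apply choose_mulVec_inj m (ZMod.val j)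
      funext y
      have h1 := congrFun h y
      simp only at h1 ⊢
      rw [← gfun_window m hm t j y, ← gfun_window m hm t' j y]
      exact h1
    apply Fin.ext
    apply Nat.eq_of_testBit_eq
    intro i
    by_cases hi : i < m
    · have := congrFun hb ⟨i, hi⟩
      simp only [bits] at this
      by_cases h1 : (t : ℕ).testBit i <;> by_cases h2 : (t' : ℕ).testBit i <;>
        simp [h1, h2] at this ⊢
    · rw [Nat.testBit_lt_two_pow, Nat.testBit_lt_two_pow]
      · exact lt_of_lt_of_le t'.2 (Nat.pow_le_pow_right (by norm_num) (by omega))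
      · exact lt_of_lt_of_le t.2 (Nat.pow_le_pow_right (by norm_num) (by omega))
  have hbij : Function.Bijective
      (fun t : Fin (2 ^ m) => fun y : Fin m => gfun m t (j + (y : ℕ))) := by
    rw [Fintype.bijective_iff_injective_and_card]
    refine ⟨hinj, ?_⟩
    simp [Fintype.card_fun]
  obtain ⟨t, ht⟩ := hbij.surjective v
  refine ⟨t, fun y => congrFun ht y, fun t' ht' => hinj ?_⟩
  rw [ht]
  funext y
  exact ht' y

/-- The weight of the `j`-th column of a doubly-periodic array `A`. -/
noncomputable def colWeight' {r s : ℕ} (A : ZMod r × ZMod s → ZMod 2) (j : ZMod s) : ℕ :=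
  {i : ZMod r | A (i, j) = 1}.ncard

/-- partial column sums -/
def psum {r s : ℕ} (A : ZMod r × ZMod s → ZMod 2) (j : ZMod s) (a : ℕ) : ZMod 2 :=
  ∑ i ∈ Finset.range a, A ((i : ZMod r), j)

lemma psum_step {r s : ℕ} (A : ZMod r × ZMod s → ZMod 2) (j : ZMod s) (a : ℕ) :
    psum A j (a + 1) = psum A j a + A ((a : ZMod r), j) :=
  Finset.sum_range_succ _ a

lemma colsum_zero {r s : ℕ} [NeZero r] (A : ZMod r × ZMod s → ZMod 2) (j : ZMod s)
    (h : Even (colWeight' A j)) : psum A j r = 0 := by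
  classical
  have h1 : psum A j r = ∑ i : ZMod r, A (i, j) := by
    unfold psum
    rw [← Fin.sum_univ_eq_sum_range (fun i => A ((i : ZMod r), j)) r]
    apply Fintype.sum_bijective (fun i : Fin r => ((i : ℕ) : ZMod r))
    · rw [Fintype.bijective_iff_injective_and_card]
      constructor
      · intro a b hab
        have ha := ZMod.val_natCast_of_lt a.2
        have hb := ZMod.val_natCast_of_lt b.2
        apply Fin.ext
        simp only at hab
        rw [← ha, ← hb, hab]
      · simp [ZMod.card]
    · intro i; rfl
  have h01 : ∀ a : ZMod 2, a = 0 ∨ a = 1 := by decide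
  have h2 : ∑ i : ZMod r, A (i, j) =
      ∑ i : ZMod r, (if A (i, j) = 1 then (1 : ZMod 2) else 0) := by
    apply Finset.sum_congr rfl
    intro i _
    rcases h01 (A (i, j)) with h' | h' <;> simp [h']
  rw [h1, h2, Finset.sum_boole]
  have h3 : colWeight' A j = (Finset.univ.filter fun i : ZMod r => A (i, j) = 1).card := by
    unfold colWeight'
    rw [Set.ncard_eq_toFinset_card', Set.toFinset_setOf]
  rw [h3] at h
  exact (ZMod.natCast_eq_zero_iff _ 2).mpr h.two_dvd

lemma psum_mul_add {r s : ℕ} [NeZero r] (A : ZMod r × ZMod s → ZMod 2) (j : ZMod s)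
    (h0 : psum A j r = 0) (q a : ℕ) : psum A j (r * q + a) = psum A j a := by
  induction q with
  | zero => simp
  | succ q ih =>
    have : r * (q + 1) + a = r + (r * q + a) := by ring
    rw [this]
    unfold psum
    rw [Finset.sum_range_add]
    have h4 : ∀ i : ℕ, (((r + i : ℕ) : ZMod r)) = ((i : ℕ) : ZMod r) := by
      intro i; push_cast [ZMod.natCast_self]; ring
    calc (∑ i ∈ Finset.range r, A ((i : ZMod r), j))
          + ∑ i ∈ Finset.range (r * q + a), A (((r + i : ℕ) : ZMod r), j)
        = psum A j r + ∑ i ∈ Finset.range (r * q + a), A ((i : ZMod r), j) := by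
          congr 1
          exact Finset.sum_congr rfl fun i _ => by rw [h4]
      _ = psum A j a := by rw [h0, zero_add]; exact ih

lemma psum_mod {r s : ℕ} [NeZero r] (A : ZMod r × ZMod s → ZMod 2) (j : ZMod s)
    (h0 : psum A j r = 0) (a : ℕ) : psum A j (a % r) = psum A j a := by
  conv_rhs => rw [← Nat.div_add_mod a r]
  rw [psum_mul_add A j h0]

/-- vertical integral of an array -/
def integ {r s : ℕ} (A : ZMod r × ZMod s → ZMod 2) : ZMod r × ZMod s → ZMod 2 :=
  fun p => psum A p.2 (ZMod.val p.1)

lemma integ_window {r s : ℕ} [NeZero r] (A : ZMod r × ZMod s → ZMod 2) (j : ZMod s)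
    (h0 : psum A j r = 0) (i : ZMod r) (a : ℕ) :
    integ A (i + (a : ℕ), j) = psum A j (ZMod.val i + a) := by
  unfold integ
  simp only
  have hval : (i + (a : ℕ)).val = (ZMod.val i + a % r) % r := by
    rw [ZMod.val_add, ZMod.val_natCast]
  rw [hval]
  have hmeq : (ZMod.val i + a % r) % r = (ZMod.val i + a) % r :=
    Nat.ModEq.add_left (ZMod.val i) (Nat.mod_modEq a r)
  rw [hmeq, psum_mod A j h0]

lemma integ_step {r s : ℕ} [NeZero r] (A : ZMod r × ZMod s → ZMod 2) (j : ZMod s)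
    (h0 : psum A j r = 0) (i : ZMod r) (a : ℕ) :
    integ A (i + ((a + 1 : ℕ) : ZMod r), j)
      = integ A (i + (a : ℕ), j) + A (i + (a : ℕ), j) := by
  rw [integ_window A j h0 i (a + 1), integ_window A j h0 i a, ← add_assoc, psum_step]
  congr 2
  push_cast [ZMod.natCast_zmod_val]
  ring


/-- `C` is an `(r, s; n, m)`-de Bruijn array code of size `Δ`: every `n × m` binary
matrix appears exactly once as a window in exactly one codeword. -/
def IsDBAC (r s n m Δ : ℕ) (C : Fin Δ → (ZMod r × ZMod s → ZMod 2)) : Prop :=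
  ∀ M : Fin n → Fin m → ZMod 2,
    ∃! p : Fin Δ × ZMod r × ZMod s,
      ∀ (x : Fin n) (y : Fin m),
        C p.1 (p.2.1 + (x : ℕ), p.2.2 + (y : ℕ)) = M x y

/-- The weight of the `j`-th column of a doubly-periodic array `A`. -/
noncomputable def colWeight {r s : ℕ} (A : ZMod r × ZMod s → ZMod 2) (j : ZMod s) : ℕ :=
  {i : ZMod r | A (i, j) = 1}.ncard

theorem stmt_11 (k n m Δ : ℕ) (hk : 2 ≤ k) (hn : 2 ≤ n) (hm : 2 ≤ m)
    (C : Fin Δ → (ZMod (2 ^ k) × ZMod (2 ^ m) → ZMod 2))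
    (hC : IsDBAC (2 ^ k) (2 ^ m) n m Δ C)
    (heven : ∀ c, ∀ j : ZMod (2 ^ m), Even (colWeight (C c) j)) :
    ∃ C' : Fin (2 ^ m * Δ) → (ZMod (2 ^ k) × ZMod (2 ^ m) → ZMod 2),
      IsDBAC (2 ^ k) (2 ^ m) (n + 1) m (2 ^ m * Δ) C' := by
  haveI h2k : NeZero (2 ^ k) := ⟨(by positivity : (0:ℕ) < 2 ^ k).ne'⟩
  haveI h2m : NeZero (2 ^ m) := ⟨(by positivity : (0:ℕ) < 2 ^ m).ne'⟩
  have hzero : ∀ c (j : ZMod (2 ^ m)), psum (C c) j (2 ^ k) = 0 :=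
    fun c j => colsum_zero (C c) j (heven c j)
  have key1 : ∀ a b g c d : ZMod 2, a + g = c → b = c + d → a + b + g = d := by decide
  have key2 : ∀ a b g u v cc : ZMod 2, a + g = u → b + g = v → b = a + cc → cc = u + v := by
    decide
  have key3 : ∀ a g u : ZMod 2, a + g = u → g = u + a := by decide
  have key0 : ∀ a b : ZMod 2, a + (b + a) = b := by decide
  refine ⟨fun q p =>
    integ (C (finProdFinEquiv.symm q).2) p + gfun m (finProdFinEquiv.symm q).1 p.2, ?_⟩
  intro M
  set D : Fin n → Fin m → ZMod 2 := fun x y => M x.castSucc y + M x.succ y with hD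
  obtain ⟨⟨c, i, j⟩, hp₀, hp₀u⟩ := hC D
  simp only at hp₀
  set v : Fin m → ZMod 2 :=
    fun y => M 0 y + integ (C c) (i, j + ((y : ℕ) : ZMod (2 ^ m))) with hv
  obtain ⟨t, ht, htu⟩ := gfun_existsUnique m (by omega) j v
  have hrow : ∀ (x : ℕ) (hx : x < n + 1) (y : Fin m),
      integ (C c) (i + ((x : ℕ) : ZMod (2 ^ k)), j + ((y : ℕ) : ZMod (2 ^ m)))
        + gfun m t (j + ((y : ℕ) : ZMod (2 ^ m))) = M ⟨x, hx⟩ y := by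
    intro x
    induction x with
    | zero =>
      intro hx y
      have h0 : (⟨0, hx⟩ : Fin (n + 1)) = 0 := rfl
      rw [h0, ht y, hv]
      simp only [Nat.cast_zero, add_zero]
      exact key0 _ _
    | succ x ihx =>
      intro hx y
      have hxn : x < n := by omega
      have hstep := integ_step (C c) (j + ((y : ℕ) : ZMod (2 ^ m))) (hzero c _) i x
      rw [hstep]
      have ih := ihx (by omega) y
      have hD' : C c (i + ((x : ℕ) : ZMod (2 ^ k)), j + ((y : ℕ) : ZMod (2 ^ m)))
          = M ⟨x, by omega⟩ y + M ⟨x + 1, hx⟩ y := by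
        simpa [hD, Fin.castSucc_mk, Fin.succ_mk] using hp₀ ⟨x, hxn⟩ y
      exact key1 _ _ _ _ _ ih hD'
  refine ⟨(finProdFinEquiv (t, c), i, j), ?_, ?_⟩
  · intro x y
    simp only [Equiv.symm_apply_apply]
    have := hrow x.val x.isLt y
    rwa [Fin.eta] at this
  · rintro ⟨q', i', j'⟩ hP'
    simp only at hP'
    set t' := (finProdFinEquiv.symm q').1 with ht'
    set c' := (finProdFinEquiv.symm q').2 with hc'
    have hD2 : ∀ (x : Fin n) (y : Fin m),
        C c' (i' + ((x : ℕ) : ZMod (2 ^ k)), j' + ((y : ℕ) : ZMod (2 ^ m))) = D x y := by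
      intro x y
      have h1 := hP' x.castSucc y
      have h2 := hP' x.succ y
      have hstep := integ_step (C c') (j' + ((y : ℕ) : ZMod (2 ^ m))) (hzero c' _) i' x.val
      rw [Fin.coe_castSucc] at h1
      rw [Fin.val_succ] at h2
      exact key2 _ _ _ _ _ _ h1 h2 hstep
    have heq := hp₀u (c', i', j') hD2
    rw [Prod.mk.injEq, Prod.mk.injEq] at heq
    obtain ⟨hcc, hii, hjj⟩ := heq
    have htop : ∀ y : Fin m, gfun m t' (j + ((y : ℕ) : ZMod (2 ^ m))) = v y := by
      intro y
      have h0 := hP' 0 y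
      rw [Fin.val_zero, Nat.cast_zero, add_zero, hcc, hii, hjj] at h0
      rw [hv]
      exact key3 _ _ _ h0
    have htt := htu t' htop
    refine Prod.ext ?_ (Prod.ext ?_ ?_) <;> simp only
    · rw [← hcc, ← htt, ht', hc']
      exact (Equiv.apply_symm_apply _ _).symm
    · exact hii
    · exact hjj
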